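/- arXiv:1908.03654 — 4 statements merged into one kernel-verified Lean document; each statement's English description precedes it below -/
import Mathlib

section
/- Let u : B_R(0) ⊂ ℝⁿ → ℝ with u(0) = 0 and Du(0) = 0. Suppose there is p > 0 and C₁ > 0 such that for every y ∈ B_R there exists a linear function L_y with |u(x) - L_y(x)| ≤ C₁|x - y|^{1+p} for all x ∈ B_R. Then u is differentiable on B_{R/2} and for all x ∈ B_{R/2}, ‖Du(x)‖ ≤ C₁(2 + 2^{1+p})|x|^p. -/
open Metric Asymptotics Filter

abbrev Euc (n : ℕ) := EuclideanSpace ℝ (Fin n)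

theorem stmt1 (n : ℕ) (R p C₁ : ℝ) (hR : 0 < R) (hp : 0 < p) (hC : 0 < C₁)
    (u : Euc n → ℝ) (hu0 : u 0 = 0) (hDu0 : fderiv ℝ u 0 = 0)
    (happ : ∀ y ∈ ball (0 : Euc n) R,
      ∃ (a : ℝ) (L : Euc n →L[ℝ] ℝ),
        ∀ x ∈ ball (0 : Euc n) R, |u x - (a + L x)| ≤ C₁ * ‖x - y‖ ^ (1 + p)) :
    ∀ x ∈ ball (0 : Euc n) (R / 2),
      DifferentiableAt ℝ u x ∧ ‖fderiv ℝ u x‖ ≤ C₁ * (2 + 2 ^ (1 + p)) * ‖x‖ ^ p := by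
  have hp1 : (1 : ℝ) + p ≠ 0 := by positivity
  -- key: every y in the ball has an affine approximation which gives HasFDerivAt
  have key : ∀ y ∈ ball (0 : Euc n) R, ∃ (a : ℝ) (L : Euc n →L[ℝ] ℝ),
      (∀ x ∈ ball (0 : Euc n) R, |u x - (a + L x)| ≤ C₁ * ‖x - y‖ ^ (1 + p)) ∧
      u y = a + L y ∧ HasFDerivAt u L y := by
    intro y hy
    obtain ⟨a, L, hL⟩ := happ y hy
    have hyy : u y = a + L y := by
      have h0 := hL y hy
      rw [sub_self, norm_zero, Real.zero_rpow hp1, mul_zero] at h0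
      have := abs_nonpos_iff.mp h0
      linarith
    refine ⟨a, L, hL, hyy, ?_⟩
    rw [hasFDerivAt_iff_isLittleO]
    have hlo : (fun x => u x - (a + L x)) =o[nhds y] fun x => x - y := by
      rw [isLittleO_iff]
      intro c hc
      have hcont : ContinuousAt (fun t : ℝ => t ^ p) 0 :=
        Real.continuousAt_rpow_const 0 p (Or.inr hp.le)
      have h2 : Tendsto (fun x : Euc n => ‖x - y‖) (nhds y) (nhds 0) := by
        have : Tendsto (fun x : Euc n => x - y) (nhds y) (nhds (y - y)) :=
          (continuous_id.sub continuous_const).tendsto y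
        simpa using this.norm
      have h3 : Tendsto (fun x : Euc n => C₁ * ‖x - y‖ ^ p) (nhds y) (nhds 0) := by
        have := (hcont.tendsto.comp h2).const_mul C₁
        simpa [Real.zero_rpow hp.ne'] using this
      have hev1 : ∀ᶠ x in nhds y, C₁ * ‖x - y‖ ^ p < c :=
        h3.eventually_lt_const hc
      have hev2 : ∀ᶠ x in nhds y, x ∈ ball (0 : Euc n) R :=
        isOpen_ball.eventually_mem hy
      filter_upwards [hev1, hev2] with x h1 h2
      have hb := hL x h2
      have hsplit : ‖x - y‖ ^ (1 + p) = ‖x - y‖ * ‖x - y‖ ^ p := by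
        rw [Real.rpow_add' (norm_nonneg _) hp1, Real.rpow_one]
      rw [Real.norm_eq_abs]
      calc |u x - (a + L x)| ≤ C₁ * ‖x - y‖ ^ (1 + p) := hb
        _ = (C₁ * ‖x - y‖ ^ p) * ‖x - y‖ := by rw [hsplit]; ring
        _ ≤ c * ‖x - y‖ := by
            apply mul_le_mul_of_nonneg_right (le_of_lt h1) (norm_nonneg _)
    refine hlo.congr' (by filter_upwards with x; rw [hyy, map_sub]; ring_nf) (by rfl)
  -- global bound |u z| ≤ C₁ ‖z‖^(1+p)
  have h0ball : (0 : Euc n) ∈ ball (0 : Euc n) R := by simp [hR]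
  obtain ⟨a₀, L₀, hb0, he0, hd0⟩ := key 0 h0ball
  have hL0 : L₀ = 0 := by rw [← hd0.fderiv, hDu0]
  have ha0 : a₀ = 0 := by
    have := he0
    rw [hu0, hL0] at this; simpa using this.symm
  have huz : ∀ z ∈ ball (0 : Euc n) R, |u z| ≤ C₁ * ‖z‖ ^ (1 + p) := by
    intro z hz
    have := hb0 z hz
    rw [hL0, ha0] at this
    simpa using this
  intro x hx
  have hxR : x ∈ ball (0 : Euc n) R := ball_subset_ball (by linarith) hx
  obtain ⟨a, L, hb, he, hd⟩ := key x hxR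
  refine ⟨hd.differentiableAt, ?_⟩
  rw [hd.fderiv]
  rcases eq_or_ne x 0 with rfl | hx0
  · have hL : L = 0 := by rw [← hd.fderiv, hDu0]
    simp [hL, Real.zero_rpow hp.ne']
  · have hxpos : (0:ℝ) < ‖x‖ := norm_pos_iff.mpr hx0
    have hxlt : ‖x‖ < R / 2 := by simpa using mem_ball_zero_iff.mp hx
    have hM : (0:ℝ) ≤ C₁ * (2 + 2 ^ (1 + p)) * ‖x‖ ^ p := by positivity
    apply ContinuousLinearMap.opNorm_le_bound L hM
    intro v
    rcases eq_or_ne v 0 with rfl | hv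
    · simp
    have hvpos : (0:ℝ) < ‖v‖ := norm_pos_iff.mpr hv
    set t := ‖x‖ / ‖v‖ with ht_def
    have ht : 0 < t := div_pos hxpos hvpos
    set z := x + t • v with hz_def
    have hzx : z - x = t • v := by simp [hz_def]
    have hzxn : ‖z - x‖ = ‖x‖ := by
      rw [hzx, norm_smul, Real.norm_eq_abs, abs_of_pos ht, ht_def,
        div_mul_cancel₀ _ hvpos.ne']
    have hzn : ‖z‖ ≤ 2 * ‖x‖ := by
      calc ‖z‖ = ‖x + t • v‖ := rfl
        _ ≤ ‖x‖ + ‖t • v‖ := norm_add_le _ _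
        _ = ‖x‖ + ‖x‖ := by rw [← hzx, hzxn]
        _ = 2 * ‖x‖ := by ring
    have hzball : z ∈ ball (0 : Euc n) R := by
      rw [mem_ball_zero_iff]
      linarith
    have e1 : |u z - (a + L z)| ≤ C₁ * ‖x‖ ^ (1 + p) := by
      have := hb z hzball
      rwa [hzxn] at this
    have e2 : |u z| ≤ C₁ * (2 ^ (1 + p) * ‖x‖ ^ (1 + p)) := by
      have h1 := huz z hzball
      have h2 : ‖z‖ ^ (1 + p) ≤ (2 * ‖x‖) ^ (1 + p) :=
        Real.rpow_le_rpow (norm_nonneg _) hzn (by positivity)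
      have h3 : (2 * ‖x‖) ^ (1 + p) = 2 ^ (1 + p) * ‖x‖ ^ (1 + p) :=
        Real.mul_rpow (by norm_num) (norm_nonneg _)
      calc |u z| ≤ C₁ * ‖z‖ ^ (1 + p) := h1
        _ ≤ C₁ * (2 ^ (1 + p) * ‖x‖ ^ (1 + p)) := by
            rw [← h3]; exact mul_le_mul_of_nonneg_left h2 hC.le
    have e3 : |u x| ≤ C₁ * ‖x‖ ^ (1 + p) := huz x hxR
    have hLzx : L (z - x) = (u z - u x) - (u z - (a + L z)) := by
      rw [map_sub, he]; ring
    have e4 : |L (z - x)| ≤ C₁ * (2 + 2 ^ (1 + p)) * ‖x‖ ^ (1 + p) := by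
      rw [hLzx]
      calc |(u z - u x) - (u z - (a + L z))|
          ≤ |u z| + |u x| + |u z - (a + L z)| := by
            have := abs_sub (u z - u x) (u z - (a + L z))
            have h' := abs_sub (u z) (u x)
            calc |(u z - u x) - (u z - (a + L z))| ≤ |u z - u x| + |u z - (a + L z)| := abs_sub _ _
              _ ≤ (|u z| + |u x|) + |u z - (a + L z)| := by
                  exact add_le_add_left (abs_sub _ _) _
        _ ≤ C₁ * (2 ^ (1 + p) * ‖x‖ ^ (1 + p)) + C₁ * ‖x‖ ^ (1 + p) + C₁ * ‖x‖ ^ (1 + p) := by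
            gcongr
        _ = C₁ * (2 + 2 ^ (1 + p)) * ‖x‖ ^ (1 + p) := by ring
    have hLtv : L (z - x) = t * L v := by rw [hzx, map_smul]; rfl
    have hsplit : ‖x‖ ^ (1 + p) = ‖x‖ * ‖x‖ ^ p := by
      rw [Real.rpow_add' (norm_nonneg _) hp1, Real.rpow_one]
    rw [hLtv, abs_mul, abs_of_pos ht, ht_def, hsplit] at e4
    -- e4 : ‖x‖/‖v‖ * |L v| ≤ C₁ * (2 + 2^(1+p)) * (‖x‖ * ‖x‖^p)
    rw [Real.norm_eq_abs]
    rw [div_mul_eq_mul_div, div_le_iff₀ hvpos] at e4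
    have e5 : ‖x‖ * |L v| ≤ ‖x‖ * (C₁ * (2 + 2 ^ (1 + p)) * ‖x‖ ^ p * ‖v‖) := by
      calc ‖x‖ * |L v| ≤ C₁ * (2 + 2 ^ (1 + p)) * (‖x‖ * ‖x‖ ^ p) * ‖v‖ := e4
        _ = ‖x‖ * (C₁ * (2 + 2 ^ (1 + p)) * ‖x‖ ^ p * ‖v‖) := by ring
    exact le_of_mul_le_mul_left e5 hxpos
end

section
/- Let u : B_R(0) ⊂ ℝⁿ → ℝ satisfy: for some p > 0, C₁ > 0, and for every y ∈ B_R there exists a linear function L_y with |u(x) - L_y(x)| ≤ C₁|x - y|^{1+p} for all x ∈ B_R. Then for all x ∈ B_{R/2}, ‖Du(x) - Du(0)‖ ≤ C₁(2 + 2^{1+p})|x|^p. -/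
open Metric

lemma key_deriv (n : ℕ) (R p C₁ : ℝ) (hp : 0 < p) (hC : 0 < C₁)
    (u : Euc n → ℝ) (a : ℝ) (L : Euc n →L[ℝ] ℝ) (y : Euc n) (hy : y ∈ ball (0 : Euc n) R)
    (h : ∀ x ∈ ball (0 : Euc n) R, |u x - (a + L x)| ≤ C₁ * ‖x - y‖ ^ (1 + p)) :
    HasFDerivAt u L y ∧ u y = a + L y := by
  have h1p : (1 : ℝ) + p ≠ 0 := by linarith
  have huy : u y = a + L y := by
    have := h y hy
    simp [Real.zero_rpow h1p] at this
    linarith [abs_nonneg (u y - (a + L y)), this]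
  refine ⟨?_, huy⟩
  rw [hasFDerivAt_iff_isLittleO, Asymptotics.isLittleO_iff]
  intro ε hε
  set δ := (ε / C₁) ^ (1 / p) with hδ
  have hδpos : 0 < δ := Real.rpow_pos_of_pos (div_pos hε hC) _
  filter_upwards [isOpen_ball.eventually_mem hy, Metric.ball_mem_nhds y hδpos] with x hball hsmall
  have hnt : ‖x - y‖ < δ := by simpa [dist_eq_norm] using hsmall
  have hb := h x hball
  have heq : u x - u y - L (x - y) = u x - (a + L x) := by
    rw [huy, map_sub]; ring
  rw [Real.norm_eq_abs, heq]
  calc |u x - (a + L x)| ≤ C₁ * ‖x - y‖ ^ (1 + p) := hb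
    _ = C₁ * ‖x - y‖ ^ p * ‖x - y‖ := by
        rw [Real.rpow_add' (norm_nonneg _) h1p, Real.rpow_one]; ring
    _ ≤ C₁ * (ε / C₁) * ‖x - y‖ := by
        have hle : ‖x - y‖ ^ p ≤ δ ^ p := Real.rpow_le_rpow (norm_nonneg _) hnt.le hp.le
        have hδp : δ ^ p = ε / C₁ := by
          rw [hδ, ← Real.rpow_mul (by positivity : (0:ℝ) ≤ ε / C₁),
            one_div, inv_mul_cancel₀ hp.ne', Real.rpow_one]
        rw [hδp] at hle
        gcongr
    _ = ε * ‖x - y‖ := by field_simp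

theorem stmt2 (n : ℕ) (R p C₁ : ℝ) (hR : 0 < R) (hp : 0 < p) (hC : 0 < C₁)
    (u : Euc n → ℝ)
    (happ : ∀ y ∈ ball (0 : Euc n) R,
      ∃ (a : ℝ) (L : Euc n →L[ℝ] ℝ),
        ∀ x ∈ ball (0 : Euc n) R, |u x - (a + L x)| ≤ C₁ * ‖x - y‖ ^ (1 + p)) :
    ∀ x ∈ ball (0 : Euc n) (R / 2),
      ‖fderiv ℝ u x - fderiv ℝ u 0‖ ≤ C₁ * (2 + 2 ^ (1 + p)) * ‖x‖ ^ p := by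
  intro x hx
  have h0R : (0 : Euc n) ∈ ball (0 : Euc n) R := by simp [hR]
  have hxR : x ∈ ball (0 : Euc n) R := by
    rw [mem_ball_zero_iff] at hx ⊢; linarith
  obtain ⟨a0, L0, h0⟩ := happ 0 h0R
  obtain ⟨ax, Lx, hx'⟩ := happ x hxR
  obtain ⟨hd0, hv0⟩ := key_deriv n R p C₁ hp hC u a0 L0 0 h0R (by simpa using h0)
  obtain ⟨hdx, hvx⟩ := key_deriv n R p C₁ hp hC u ax Lx x hxR hx'
  rw [hdx.fderiv, hd0.fderiv]
  rcases eq_or_ne x 0 with h | hne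
  · subst h
    rw [hdx.unique hd0]
    simp [Real.zero_rpow hp.ne']
  have hr : 0 < ‖x‖ := norm_pos_iff.mpr hne
  have h1p : (0:ℝ) < 1 + p := by linarith
  have h2p : (0:ℝ) ≤ (2:ℝ) ^ (1 + p) := (Real.rpow_pos_of_pos two_pos _).le
  apply ContinuousLinearMap.opNorm_le_bound
  · have : (0:ℝ) ≤ ‖x‖ ^ p := (Real.rpow_pos_of_pos hr p).le
    positivity
  intro v
  rcases eq_or_ne v 0 with hv | hv
  · simp [hv]
  have hnv : 0 < ‖v‖ := norm_pos_iff.mpr hv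
  set c : ℝ := ‖x‖ / ‖v‖ with hc
  have hcpos : 0 < c := div_pos hr hnv
  set z : Euc n := x + c • v with hz
  have hzx : z - x = c • v := by rw [hz]; abel
  have hncv : ‖c • v‖ = ‖x‖ := by
    rw [norm_smul, Real.norm_eq_abs, abs_of_pos hcpos, hc, div_mul_cancel₀ _ hnv.ne']
  have hnz : ‖z‖ ≤ 2 * ‖x‖ := by
    calc ‖z‖ ≤ ‖x‖ + ‖c • v‖ := norm_add_le _ _
      _ = 2 * ‖x‖ := by rw [hncv]; ring
  have hzR : z ∈ ball (0 : Euc n) R := by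
    rw [mem_ball_zero_iff] at hx ⊢
    linarith
  -- four estimates
  have t1 : |u z - (ax + Lx z)| ≤ C₁ * ‖x‖ ^ (1 + p) := by
    have := hx' z hzR; rwa [hzx, hncv] at this
  have t2 : u x = ax + Lx x := hvx
  have t3 : |u z - (a0 + L0 z)| ≤ C₁ * (2 ^ (1 + p) * ‖x‖ ^ (1 + p)) := by
    have hb := h0 z hzR
    rw [sub_zero] at hb
    refine hb.trans ?_
    have : ‖z‖ ^ (1 + p) ≤ (2 * ‖x‖) ^ (1 + p) :=
      Real.rpow_le_rpow (norm_nonneg _) hnz h1p.le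
    rw [Real.mul_rpow (by norm_num) (norm_nonneg _)] at this
    nlinarith
  have t4 : |u x - (a0 + L0 x)| ≤ C₁ * ‖x‖ ^ (1 + p) := by
    have := h0 x hxR; rwa [sub_zero] at this
  -- combine
  have hkey : c * ((Lx - L0) v) =
      -(u z - (ax + Lx z)) + (u z - (a0 + L0 z)) - (u x - (a0 + L0 x)) + (u x - (ax + Lx x)) := by
    have e1 : Lx z = Lx x + c * Lx v := by rw [hz, map_add, map_smul]; simp
    have e2 : L0 z = L0 x + c * L0 v := by rw [hz, map_add, map_smul]; simp
    simp only [ContinuousLinearMap.sub_apply]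
    rw [e1, e2]; ring
  have habs : c * |(Lx - L0) v| ≤ C₁ * (2 + 2 ^ (1 + p)) * ‖x‖ ^ (1 + p) := by
    have h2 : u x - (ax + Lx x) = 0 := by rw [t2]; ring
    have := abs_le_abs (le_refl (c * ((Lx - L0) v)))
    calc c * |(Lx - L0) v| = |c * ((Lx - L0) v)| := by
          rw [abs_mul, abs_of_pos hcpos]
      _ ≤ |u z - (ax + Lx z)| + |u z - (a0 + L0 z)| + |u x - (a0 + L0 x)| + |u x - (ax + Lx x)| := by
          rw [hkey]
          calc |(-(u z - (ax + Lx z)) + (u z - (a0 + L0 z)) - (u x - (a0 + L0 x))) + (u x - (ax + Lx x))|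
              ≤ |(-(u z - (ax + Lx z)) + (u z - (a0 + L0 z)) - (u x - (a0 + L0 x)))| + |u x - (ax + Lx x)| := abs_add_le _ _
            _ ≤ |(-(u z - (ax + Lx z)) + (u z - (a0 + L0 z)))| + |u x - (a0 + L0 x)| + |u x - (ax + Lx x)| := by
                have := abs_sub (-(u z - (ax + Lx z)) + (u z - (a0 + L0 z))) (u x - (a0 + L0 x))
                linarith
            _ ≤ |u z - (ax + Lx z)| + |u z - (a0 + L0 z)| + |u x - (a0 + L0 x)| + |u x - (ax + Lx x)| := by
                have h := abs_add_le (-(u z - (ax + Lx z))) (u z - (a0 + L0 z))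
                rw [abs_neg] at h
                linarith
      _ ≤ C₁ * ‖x‖ ^ (1 + p) + C₁ * (2 ^ (1 + p) * ‖x‖ ^ (1 + p)) + C₁ * ‖x‖ ^ (1 + p) + 0 := by
          rw [h2, abs_zero]
          linarith
      _ = C₁ * (2 + 2 ^ (1 + p)) * ‖x‖ ^ (1 + p) := by ring
  have hpow : ‖x‖ ^ (1 + p) = ‖x‖ * ‖x‖ ^ p := by
    rw [Real.rpow_add hr, Real.rpow_one]
  rw [hpow] at habs
  rw [hc] at habs
  rw [div_mul_eq_mul_div, div_le_iff₀ hnv] at habs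
  calc ‖(Lx - L0) v‖ = |(Lx - L0) v| := rfl
    _ ≤ C₁ * (2 + 2 ^ (1 + p)) * ‖x‖ ^ p * ‖v‖ := by
        nlinarith [abs_nonneg ((Lx - L0) v), hr, habs]
end

section
/- Let u : B₁(0) ⊂ ℝⁿ → ℝ satisfy: for some α ∈ (0,1), C₁ > 0, and for every y ∈ B_{1/2} there exists a quadratic polynomial Q_y such that |u(x) - Q_y(x)| ≤ C₁|x - y|^{2+α} for all x ∈ B₁. Then u is twice differentiable on B_{1/4} and for all x ∈ B_{1/4} and all indices i, j, |∂ᵢ∂ⱼu(x) - ∂ᵢ∂ⱼu(0)| ≤ (2 + 2^{2+α})² C₁ |x|^α. -/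
open Metric

/-- A quadratic polynomial bounded by `M` on `ball x₀ r` has controlled
first-order coefficients (at `x₀`) and second-order part. -/
lemma quad_coeff_bound {n : ℕ} (B : Euc n →L[ℝ] Euc n →L[ℝ] ℝ) (c : ℝ) (l : Euc n →L[ℝ] ℝ)
    (x₀ : Euc n) (r M : ℝ) (hr : 0 < r)
    (h : ∀ z ∈ ball x₀ r, |c + l z + B z z| ≤ M) :
    (∀ v : Euc n, |B v v| * r ^ 2 ≤ 2 * M * ‖v‖ ^ 2) ∧
    (∀ v : Euc n, |l v + B x₀ v + B v x₀| * r ≤ M * ‖v‖) := by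
  have hM : 0 ≤ M := le_trans (abs_nonneg _) (h x₀ (mem_ball_self hr))
  have expand : ∀ (w : Euc n) (s : ℝ),
      c + l (x₀ + s • w) + B (x₀ + s • w) (x₀ + s • w)
        = (c + l x₀ + B x₀ x₀) + s * (l w + B x₀ w + B w x₀) + s ^ 2 * (B w w) := by
    intro w s
    simp only [map_add, map_smul, ContinuousLinearMap.add_apply,
      ContinuousLinearMap.smul_apply, smul_eq_mul]
    ring
  have step : ∀ (v : Euc n) (t : ℝ), 0 < t → t * ‖v‖ < r →
      |B v v| * t ^ 2 ≤ 2 * M ∧ |l v + B x₀ v + B v x₀| * t ≤ M := by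
    intro v t ht htr
    have hmem : ∀ s : ℝ, |s| * ‖v‖ < r → x₀ + s • v ∈ ball x₀ r := by
      intro s hs
      simp only [mem_ball, dist_eq_norm, add_sub_cancel_left, norm_smul, Real.norm_eq_abs]
      exact hs
    have h1 := h _ (hmem t (by rwa [abs_of_pos ht]))
    have h2 := h _ (hmem (-t) (by rwa [abs_neg, abs_of_pos ht]))
    have h0 := h x₀ (mem_ball_self hr)
    rw [expand] at h1 h2
    set A := c + l x₀ + B x₀ x₀ with hA
    set G := l v + B x₀ v + B v x₀ with hG
    set D := B v v with hD
    rw [abs_le] at h0 h1 h2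
    constructor
    · rcases abs_cases D with ⟨hd, -⟩ | ⟨hd, -⟩ <;> rw [hd] <;>
        nlinarith [h1.1, h1.2, h2.1, h2.2, h0.1, h0.2]
    · rcases abs_cases G with ⟨hg, -⟩ | ⟨hg, -⟩ <;> rw [hg] <;>
        nlinarith [h1.1, h1.2, h2.1, h2.2, h0.1, h0.2]
  have limit : ∀ (v : Euc n) (E : ℝ) (K : ℝ), 0 ≤ K → v ≠ 0 →
      (∀ t : ℝ, 0 < t → t * ‖v‖ < r → E * t ≤ K) → 0 ≤ E → E * (r / ‖v‖) ≤ K := by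
    intro v E K hK hv hstep hE
    have hvpos : (0:ℝ) < ‖v‖ := norm_pos_iff.mpr hv
    have hT : (0:ℝ) < r / ‖v‖ := by positivity
    have hten : Filter.Tendsto (fun t : ℝ => E * t) (nhdsWithin (r / ‖v‖) (Set.Iio (r / ‖v‖)))
        (nhds (E * (r / ‖v‖))) :=
      ((continuous_const.mul continuous_id).tendsto _).mono_left nhdsWithin_le_nhds
    refine le_of_tendsto hten ?_
    filter_upwards [Ioo_mem_nhdsLT_of_mem (Set.mem_Ioc.mpr ⟨hT, le_refl _⟩)] with t ht
    exact hstep t ht.1 (by rw [← lt_div_iff₀ hvpos]; exact ht.2)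
  constructor
  · intro v
    rcases eq_or_ne v 0 with rfl | hv
    · simp
    have hvpos : (0:ℝ) < ‖v‖ := norm_pos_iff.mpr hv
    -- apply limit with E = |B v v| * t, twice?  Need quadratic in t.
    -- Use E * t ≤ K with E := |B v v| * t ... not linear.  Do it directly.
    have hten : Filter.Tendsto (fun t : ℝ => |B v v| * t ^ 2)
        (nhdsWithin (r / ‖v‖) (Set.Iio (r / ‖v‖))) (nhds (|B v v| * (r / ‖v‖) ^ 2)) :=
      ((continuous_const.mul (continuous_pow 2)).tendsto _).mono_left nhdsWithin_le_nhds
    have hT : (0:ℝ) < r / ‖v‖ := by positivity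
    have key : |B v v| * (r / ‖v‖) ^ 2 ≤ 2 * M := by
      refine le_of_tendsto hten ?_
      filter_upwards [Ioo_mem_nhdsLT_of_mem (Set.mem_Ioc.mpr ⟨hT, le_refl _⟩)] with t ht
      exact (step v t ht.1 (by rw [← lt_div_iff₀ hvpos]; exact ht.2)).1
    have h2 : |B v v| * (r / ‖v‖) ^ 2 * ‖v‖ ^ 2 ≤ 2 * M * ‖v‖ ^ 2 :=
      mul_le_mul_of_nonneg_right key (by positivity)
    calc |B v v| * r ^ 2 = |B v v| * (r / ‖v‖) ^ 2 * ‖v‖ ^ 2 := by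
          field_simp
      _ ≤ 2 * M * ‖v‖ ^ 2 := h2
  · intro v
    rcases eq_or_ne v 0 with rfl | hv
    · simp
    have hvpos : (0:ℝ) < ‖v‖ := norm_pos_iff.mpr hv
    have key : |l v + B x₀ v + B v x₀| * (r / ‖v‖) ≤ M :=
      limit v _ M hM hv (fun t ht htr => (step v t ht htr).2) (abs_nonneg _)
    have h2 : |l v + B x₀ v + B v x₀| * (r / ‖v‖) * ‖v‖ ≤ M * ‖v‖ :=
      mul_le_mul_of_nonneg_right key (norm_nonneg v)
    calc |l v + B x₀ v + B v x₀| * r = |l v + B x₀ v + B v x₀| * (r / ‖v‖) * ‖v‖ := by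
          field_simp
      _ ≤ M * ‖v‖ := h2

lemma mixed_bound {n : ℕ} (B : Euc n →L[ℝ] Euc n →L[ℝ] ℝ) (c : ℝ) (l : Euc n →L[ℝ] ℝ)
    (x₀ : Euc n) (r M : ℝ) (hr : 0 < r)
    (h : ∀ z ∈ ball x₀ r, |c + l z + B z z| ≤ M) (v w : Euc n) :
    |B v w + B w v| * r ^ 2 ≤ 2 * M * (‖v‖ ^ 2 + ‖w‖ ^ 2) := by
  obtain ⟨hq, -⟩ := quad_coeff_bound B c l x₀ r M hr h
  have h1 := hq (v + w)
  have h2 := hq (v - w)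
  have hpar := parallelogram_law_with_norm ℝ v w
  have hiden : B (v + w) (v + w) - B (v - w) (v - w) = 2 * (B v w + B w v) := by
    simp only [map_add, map_sub, ContinuousLinearMap.add_apply, ContinuousLinearMap.sub_apply]
    ring
  have habs : |B v w + B w v| * 2 ≤ |B (v + w) (v + w)| + |B (v - w) (v - w)| := by
    have := abs_sub (B (v + w) (v + w)) (B (v - w) (v - w))
    rw [hiden, abs_mul, abs_two] at this
    linarith
  have hM : 0 ≤ M := le_trans (abs_nonneg _) (h x₀ (mem_ball_self hr))
  have hpar2 : M * (‖v + w‖ * ‖v + w‖ + ‖v - w‖ * ‖v - w‖)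
      = M * (2 * (‖v‖ * ‖v‖ + ‖w‖ * ‖w‖)) := by linear_combination M * hpar
  nlinarith [mul_le_mul_of_nonneg_right habs (sq_nonneg r), h1, h2, hpar2]
set_option maxHeartbeats 2000000 in
theorem stmt3 (n : ℕ) (α C₁ : ℝ) (hα : α ∈ Set.Ioo (0:ℝ) 1) (hC : 0 < C₁)
    (u : Euc n → ℝ)
    (happ : ∀ y ∈ ball (0 : Euc n) (1/2),
      ∃ (a : ℝ) (L : Euc n →L[ℝ] ℝ) (Q : Euc n →L[ℝ] Euc n →L[ℝ] ℝ),
        ∀ x ∈ ball (0 : Euc n) 1, |u x - (a + L x + Q x x)| ≤ C₁ * ‖x - y‖ ^ (2 + α)) :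
    ∀ x ∈ ball (0 : Euc n) (1/4),
      (DifferentiableAt ℝ u x ∧ DifferentiableAt ℝ (fderiv ℝ u) x) ∧
      ∀ i j : Fin n,
        |fderiv ℝ (fderiv ℝ u) x (EuclideanSpace.single i 1) (EuclideanSpace.single j 1)
          - fderiv ℝ (fderiv ℝ u) 0 (EuclideanSpace.single i 1) (EuclideanSpace.single j 1)|
          ≤ (2 + 2 ^ (2 + α)) ^ 2 * C₁ * ‖x‖ ^ α := by
  obtain ⟨hα0, hα1⟩ := hα
  classical
  choose! a L Q hQ using happ
  set K : ℝ := C₁ * (1 + 2 ^ (2 + α)) with hK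
  have hKpos : 0 < K := by
    have : (0:ℝ) < 2 ^ (2 + α) := Real.rpow_pos_of_pos (by norm_num) _
    positivity
  set g : Euc n → (Euc n →L[ℝ] ℝ) := fun y => L y + Q y y + (Q y).flip y with hg
  -- norms of points in balls
  have hnorm : ∀ y : Euc n, ∀ R : ℝ, y ∈ ball (0 : Euc n) R ↔ ‖y‖ < R := by
    intro y R; simp [mem_ball, dist_zero_right]
  -- Claim 1 : u is differentiable at every point of ball 0 (1/2) with derivative g
  have claim1 : ∀ y ∈ ball (0:Euc n) (1/2), HasFDerivAt u (g y) y := by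
    intro y hy
    have hy1 : y ∈ ball (0:Euc n) 1 := by
      rw [hnorm] at *; linarith
    have hQy := hQ y hy
    have hp : HasFDerivAt (fun x => a y + L y x + Q y x x) (g y) y := by
      have h2 : HasFDerivAt (fun x : Euc n => Q y x x) (Q y y + (Q y).flip y) y := by
        have hb := (Q y).hasFDerivAt_of_bilinear (hasFDerivAt_id y) (hasFDerivAt_id y)
        refine hb.congr_fderiv ?_
        ext v; simp
      have h1 : HasFDerivAt (fun x : Euc n => a y + L y x) (L y) y :=
        (L y).hasFDerivAt.const_add (a y)
      have hsum' := h1.add h2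
      have hgy : g y = L y + ((Q y) y + (Q y).flip y) := by
        simp only [hg]; rw [add_assoc]
      rw [hgy]
      exact hsum'
    have hpy : u y - (a y + L y y + Q y y y) = 0 := by
      have := hQy y hy1
      simp only [sub_self, norm_zero] at this
      rw [Real.zero_rpow (by positivity : (2:ℝ) + α ≠ 0), mul_zero] at this
      exact abs_eq_zero.mp (le_antisymm this (abs_nonneg _))
    have he : HasFDerivAt (fun x => u x - (a y + L y x + Q y x x))
        (0 : Euc n →L[ℝ] ℝ) y := by
      rw [hasFDerivAt_iff_isLittleO, Asymptotics.isLittleO_iff]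
      intro ε hε
      have hten : Filter.Tendsto (fun x : Euc n => C₁ * ‖x - y‖ ^ (1 + α)) (nhds y)
          (nhds 0) := by
        have t1 : Filter.Tendsto (fun x : Euc n => ‖x - y‖) (nhds y) (nhds 0) := by
          have hcont : Continuous (fun x : Euc n => ‖x - y‖) :=
            (continuous_id.sub continuous_const).norm
          have := hcont.tendsto y
          simpa using this
        have t2 : Filter.Tendsto (fun s : ℝ => C₁ * s ^ (1 + α)) (nhds 0) (nhds 0) := by
          have hc := (Real.continuousAt_rpow_const 0 (1 + α)
            (Or.inr (by positivity : (0:ℝ) ≤ 1 + α))).tendsto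
          rw [Real.zero_rpow (by positivity : (1:ℝ) + α ≠ 0)] at hc
          simpa using hc.const_mul C₁
        exact t2.comp t1
      filter_upwards [isOpen_ball.mem_nhds hy1, hten.eventually (eventually_le_nhds hε)]
        with x hx1 hx2
      have hb := hQy x hx1
      rw [hpy, sub_zero, ContinuousLinearMap.zero_apply, sub_zero]
      rcases eq_or_ne x y with rfl | hxy
      · simp [hpy]
      have hpos : (0:ℝ) < ‖x - y‖ := norm_pos_iff.mpr (sub_ne_zero.mpr hxy)
      calc ‖u x - (a y + L y x + Q y x x)‖ ≤ C₁ * ‖x - y‖ ^ (2 + α) := hb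
        _ = C₁ * ‖x - y‖ ^ (1 + α) * ‖x - y‖ := by
            rw [show (2:ℝ) + α = (1 + α) + 1 by ring, Real.rpow_add hpos, Real.rpow_one]
            ring
        _ ≤ ε * ‖x - y‖ := by
            have := mul_le_mul_of_nonneg_right hx2 (norm_nonneg (x - y))
            simpa using this
    have hsum := hp.add he
    have heq : (fun x => (a y + L y x + Q y x x) + (u x - (a y + L y x + Q y x x))) = u := by
      funext x; ring
    rw [show ((fun x => a y + L y x + Q y x x) + fun x => u x - (a y + L y x + Q y x x)) = u from heq] at hsum
    simpa using hsum
  -- key Hölder-type comparison estimate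
  have keybd : ∀ y ∈ ball (0:Euc n) (1/2), ∀ z ∈ ball (0:Euc n) (1/2),
      (‖y‖ + ‖y - z‖ ≤ 1) → y ≠ z →
      ∀ w ∈ ball y ‖y - z‖,
        |(a y - a z) + (L y - L z) w + (Q y - Q z) w w| ≤ K * ‖y - z‖ ^ (2 + α) := by
    intro y hy z hz hsum hne w hw
    set r : ℝ := ‖y - z‖ with hr
    have hrpos : 0 < r := norm_pos_iff.mpr (sub_ne_zero.mpr hne)
    have hw1 : ‖w - y‖ < r := by rwa [mem_ball, dist_eq_norm] at hw
    have hw2 : ‖w - z‖ < 2 * r := by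
      calc ‖w - z‖ = ‖(w - y) + (y - z)‖ := by rw [sub_add_sub_cancel]
        _ ≤ ‖w - y‖ + r := norm_add_le _ _
        _ < 2 * r := by linarith
    have hwball : w ∈ ball (0:Euc n) 1 := by
      rw [hnorm]
      calc ‖w‖ = ‖(w - y) + y‖ := by rw [sub_add_cancel]
        _ ≤ ‖w - y‖ + ‖y‖ := norm_add_le _ _
        _ < r + ‖y‖ := by linarith
        _ ≤ 1 := by linarith
    have e1 := hQ y hy w hwball
    have e2 := hQ z hz w hwball
    have hsplit : (a y - a z) + (L y - L z) w + (Q y - Q z) w w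
        = (u w - (a z + L z w + Q z w w)) - (u w - (a y + L y w + Q y w w)) := by
      simp only [ContinuousLinearMap.sub_apply]
      ring
    rw [hsplit]
    have hrnn : (0:ℝ) ≤ r := hrpos.le
    have hmono1 : ‖w - y‖ ^ (2 + α) ≤ r ^ (2 + α) :=
      Real.rpow_le_rpow (norm_nonneg _) hw1.le (by positivity)
    have hmono2 : ‖w - z‖ ^ (2 + α) ≤ (2 * r) ^ (2 + α) :=
      Real.rpow_le_rpow (norm_nonneg _) hw2.le (by positivity)
    have h2r : (2 * r) ^ (2 + α) = 2 ^ (2 + α) * r ^ (2 + α) :=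
      Real.mul_rpow (by norm_num) hrnn
    calc |(u w - (a z + L z w + Q z w w)) - (u w - (a y + L y w + Q y w w))|
        ≤ |u w - (a z + L z w + Q z w w)| + |u w - (a y + L y w + Q y w w)| :=
          abs_sub _ _
      _ ≤ C₁ * ‖w - z‖ ^ (2 + α) + C₁ * ‖w - y‖ ^ (2 + α) := add_le_add e2 e1
      _ ≤ C₁ * (2 ^ (2 + α) * r ^ (2 + α)) + C₁ * r ^ (2 + α) := by
          rw [← h2r]
          exact add_le_add (mul_le_mul_of_nonneg_left hmono2 hC.le)
            (mul_le_mul_of_nonneg_left hmono1 hC.le)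
      _ = K * r ^ (2 + α) := by rw [hK]; ring
  -- Claim 3 : g has derivative Q z + (Q z).flip at every z in ball 0 (1/2)
  have claim3 : ∀ z ∈ ball (0:Euc n) (1/2), HasFDerivAt g (Q z + (Q z).flip) z := by
    intro z hz
    have hz2 : ‖z‖ < 1/2 := (hnorm z _).mp hz
    set δ : ℝ := 1/2 - ‖z‖ with hδ
    have hδpos : 0 < δ := by rw [hδ]; linarith
    have key : ∀ y : Euc n, ‖y - z‖ < δ →
        ‖g y - g z - (Q z + (Q z).flip) (y - z)‖ ≤ K * ‖y - z‖ ^ (1 + α) := by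
      intro y hyz
      rcases eq_or_ne y z with rfl | hne
      · simp only [sub_self, map_zero, sub_zero, norm_zero,
          Real.zero_rpow (by positivity : (1:ℝ) + α ≠ 0), mul_zero, le_refl]
      set r : ℝ := ‖y - z‖ with hr
      have hrpos : 0 < r := norm_pos_iff.mpr (sub_ne_zero.mpr hne)
      have hynorm : ‖y‖ < 1/2 := by
        calc ‖y‖ = ‖(y - z) + z‖ := by rw [sub_add_cancel]
          _ ≤ r + ‖z‖ := norm_add_le _ _
          _ < δ + ‖z‖ := by linarith
          _ = 1/2 := by rw [hδ]; ring
      have hy12 : y ∈ ball (0:Euc n) (1/2) := (hnorm y _).mpr hynorm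
      have hsum : ‖y‖ + ‖y - z‖ ≤ 1 := by
        have : r < δ := hyz
        rw [hδ] at this
        have : r ≤ 1/2 := by linarith [norm_nonneg z]
        linarith
      have hbd := keybd y hy12 z hz hsum hne
      obtain ⟨-, hlin⟩ := quad_coeff_bound (Q y - Q z) (a y - a z) (L y - L z) y r
        (K * r ^ (2 + α)) hrpos hbd
      refine ContinuousLinearMap.opNorm_le_bound _ (by positivity) ?_
      intro v
      have happly : (g y - g z - (Q z + (Q z).flip) (y - z)) v
          = (L y - L z) v + (Q y - Q z) y v + (Q y - Q z) v y := by
        simp only [hg, ContinuousLinearMap.sub_apply, ContinuousLinearMap.add_apply,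
          ContinuousLinearMap.flip_apply, map_sub]
        ring
      rw [happly, Real.norm_eq_abs]
      have := hlin v
      have hsplit : K * r ^ (2 + α) = (K * r ^ (1 + α)) * r := by
        rw [show (2:ℝ) + α = (1 + α) + 1 by ring, Real.rpow_add hrpos, Real.rpow_one]
        ring
      rw [hsplit] at this
      have := le_div_iff₀ hrpos |>.mpr this
      calc |(L y - L z) v + (Q y - Q z) y v + (Q y - Q z) v y|
          ≤ K * r ^ (1 + α) * r * ‖v‖ / r := this
        _ = K * r ^ (1 + α) * ‖v‖ := by field_simp
    rw [hasFDerivAt_iff_isLittleO, Asymptotics.isLittleO_iff]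
    intro ε hε
    have hten : Filter.Tendsto (fun y : Euc n => K * ‖y - z‖ ^ α) (nhds z) (nhds 0) := by
      have t1 : Filter.Tendsto (fun y : Euc n => ‖y - z‖) (nhds z) (nhds 0) := by
        have hcont : Continuous (fun y : Euc n => ‖y - z‖) :=
          (continuous_id.sub continuous_const).norm
        have := hcont.tendsto z
        simpa using this
      have t2 : Filter.Tendsto (fun s : ℝ => K * s ^ α) (nhds 0) (nhds 0) := by
        have hc := (Real.continuousAt_rpow_const 0 α (Or.inr hα0.le)).tendsto
        rw [Real.zero_rpow hα0.ne'] at hc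
        simpa using hc.const_mul K
      exact t2.comp t1
    have hballmem : ∀ᶠ y in nhds z, ‖y - z‖ < δ := by
      filter_upwards [Metric.ball_mem_nhds z hδpos] with y hy
      rwa [mem_ball, dist_eq_norm] at hy
    filter_upwards [hballmem, hten.eventually (eventually_le_nhds hε)] with y h1 h2
    rcases eq_or_ne y z with rfl | hne
    · simp only [sub_self, map_zero, sub_zero, norm_zero, mul_zero, le_refl]
    have hrpos : (0:ℝ) < ‖y - z‖ := norm_pos_iff.mpr (sub_ne_zero.mpr hne)
    calc ‖g y - g z - (Q z + (Q z).flip) (y - z)‖ ≤ K * ‖y - z‖ ^ (1 + α) := key y h1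
      _ = K * ‖y - z‖ ^ α * ‖y - z‖ := by
          rw [show (1:ℝ) + α = α + 1 by ring, Real.rpow_add hrpos, Real.rpow_one]; ring
      _ ≤ ε * ‖y - z‖ := mul_le_mul_of_nonneg_right h2 (norm_nonneg _)
  -- assemble
  have hgeq : ∀ z ∈ ball (0:Euc n) (1/2), fderiv ℝ u =ᶠ[nhds z] g := by
    intro z hz
    filter_upwards [isOpen_ball.mem_nhds hz] with y hy
    exact (claim1 y hy).fderiv
  have claim4 : ∀ z ∈ ball (0:Euc n) (1/2),
      HasFDerivAt (fderiv ℝ u) (Q z + (Q z).flip) z := fun z hz =>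
    (claim3 z hz).congr_of_eventuallyEq (hgeq z hz)
  have h02 : (0:Euc n) ∈ ball (0:Euc n) (1/2) := mem_ball_self (by norm_num)
  intro x hx
  have hx4 : ‖x‖ < 1/4 := (hnorm x _).mp hx
  have hx2 : x ∈ ball (0:Euc n) (1/2) := (hnorm x _).mpr (by linarith)
  refine ⟨⟨(claim1 x hx2).differentiableAt, (claim4 x hx2).differentiableAt⟩, ?_⟩
  intro i j
  rw [(claim4 x hx2).fderiv, (claim4 0 h02).fderiv]
  set ei : Euc n := EuclideanSpace.single i 1
  set ej : Euc n := EuclideanSpace.single j 1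
  have hnei : ‖ei‖ = 1 := by simp [ei]
  have hnej : ‖ej‖ = 1 := by simp [ej]
  have hrw : (Q x + (Q x).flip) ei ej - (Q 0 + (Q 0).flip) ei ej
      = (Q x - Q 0) ei ej + (Q x - Q 0) ej ei := by
    simp only [ContinuousLinearMap.add_apply, ContinuousLinearMap.sub_apply,
      ContinuousLinearMap.flip_apply]
    ring
  rw [hrw]
  rcases eq_or_ne x 0 with rfl | hxne
  · simp [Real.zero_rpow hα0.ne']
  set r : ℝ := ‖x‖ with hr
  have hrpos : 0 < r := norm_pos_iff.mpr hxne
  have hsum : ‖x‖ + ‖x - 0‖ ≤ 1 := by rw [sub_zero]; linarith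
  have hbd := keybd x hx2 0 h02 hsum hxne
  rw [sub_zero] at hbd
  have hmix := mixed_bound (Q x - Q 0) (a x - a 0) (L x - L 0) x r
    (K * r ^ (2 + α)) hrpos hbd ei ej
  rw [hnei, hnej] at hmix
  have hrsplit : r ^ (2 + α) = r ^ α * r ^ 2 := by
    rw [show (2:ℝ) + α = α + 2 by ring, Real.rpow_add hrpos,
      show ((2:ℝ) : ℝ) = ((2:ℕ) : ℝ) by norm_num, Real.rpow_natCast]
  rw [hrsplit] at hmix
  -- hmix : |...| * r^2 ≤ 2 * (K * (r^α * r^2)) * (1^2 + 1^2)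
  have hβ : (0:ℝ) < 2 ^ (2 + α) := Real.rpow_pos_of_pos (by norm_num) _
  have hrα : (0:ℝ) < r ^ α := Real.rpow_pos_of_pos hrpos _
  have hr2 : (0:ℝ) < r ^ 2 := by positivity
  rw [hK] at hmix
  nlinarith [sq_nonneg (2 ^ (2 + α) : ℝ), mul_pos (mul_pos hC hrα) hr2,
    mul_pos hrα hr2, sq_nonneg ((2 ^ (2 + α) : ℝ) * (r ^ α * r ^ 2))]
end

section
/- Let u : B₁ ⊂ ℝ² → ℝ be twice differentiable, let a = (a^{ij}) be a symmetric 2×2 matrix field with a^{ij}u_{ij} = f, and let ε > 0. Then pointwise ‖D²u‖²_{HS} ≤ (1+ε)‖δ - a‖²_{HS}‖D²u‖²_{HS} + (1 + 1/ε) f² + 2(u₁₂u₂₁ - u₁₁u₂₂), where δ is the identity matrix. -/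
open Metric

abbrev Euc2 := EuclideanSpace ℝ (Fin 2)

lemma cs4 (d1 d2 d3 d4 h1 h2 h3 h4 : ℝ) :
    (d1*h1+d2*h2+d3*h3+d4*h4)^2 ≤ (d1^2+d2^2+d3^2+d4^2)*(h1^2+h2^2+h3^2+h4^2) := by
  nlinarith [sq_nonneg (d1*h2-d2*h1), sq_nonneg (d1*h3-d3*h1), sq_nonneg (d1*h4-d4*h1),
    sq_nonneg (d2*h3-d3*h2), sq_nonneg (d2*h4-d4*h2), sq_nonneg (d3*h4-d4*h3)]

lemma young4 (ε x y : ℝ) (hε : 0 < ε) : (x + y)^2 ≤ (1+ε)*x^2 + (1+1/ε)*y^2 := by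
  rw [← mul_le_mul_iff_right₀ hε]
  have h2 : ε * ((1 + 1/ε) * y^2) = (ε + 1) * y^2 := by field_simp
  nlinarith [sq_nonneg (ε*x - y)]

set_option maxHeartbeats 1000000 in
lemma combine (ε f a00 a01 a10 a11 h00 h01 h10 h11 : ℝ) (hε : 0 < ε)
    (hf : a00*h00 + a01*h01 + (a10*h10 + a11*h11) = f) (hs : h01 = h10) :
    h00^2 + h01^2 + (h10^2 + h11^2)
      ≤ (1+ε) * ((1-a00)^2 + (0-a01)^2 + ((0-a10)^2 + (1-a11)^2))
          * (h00^2 + h01^2 + (h10^2 + h11^2))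
        + (1 + 1/ε) * f^2 + 2 * (h01*h10 - h00*h11) := by
  have hcs := cs4 (1-a00) (0-a01) (0-a10) (1-a11) h00 h01 h10 h11
  have hyoung := young4 ε ((1-a00)*h00+(0-a01)*h01+(0-a10)*h10+(1-a11)*h11) f hε
  have hT : ((1-a00)*h00+(0-a01)*h01+(0-a10)*h10+(1-a11)*h11) + f = h00 + h11 := by
    rw [← hf]; ring
  have hεpos : (0:ℝ) ≤ 1 + ε := by linarith
  have key : (h00 + h11)^2
      ≤ (1+ε)*(((1-a00)^2+(0-a01)^2+(0-a10)^2+(1-a11)^2)*(h00^2+h01^2+h10^2+h11^2))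
        + (1+1/ε)*f^2 := by
    rw [← hT]
    refine hyoung.trans ?_
    have := mul_le_mul_of_nonneg_left hcs hεpos
    linarith
  subst hs
  nlinarith [key]

theorem stmt14 (ε : ℝ) (hε : 0 < ε)
    (u : Euc2 → ℝ) (hu : ContDiff ℝ 2 u)
    (a : Euc2 → Matrix (Fin 2) (Fin 2) ℝ) (hasymm : ∀ x, (a x).IsSymm)
    (f : Euc2 → ℝ)
    (heq : ∀ x : Euc2, ∑ i : Fin 2, ∑ j : Fin 2, a x i j *
      iteratedFDeriv ℝ 2 u x ![EuclideanSpace.single i 1, EuclideanSpace.single j 1] = f x) :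
    ∀ (x : Euc2) (H : Fin 2 → Fin 2 → ℝ),
      (∀ i j, H i j = iteratedFDeriv ℝ 2 u x
        ![EuclideanSpace.single i 1, EuclideanSpace.single j 1]) →
      ∑ i : Fin 2, ∑ j : Fin 2, (H i j) ^ 2
        ≤ (1 + ε) * (∑ i : Fin 2, ∑ j : Fin 2, ((if i = j then (1:ℝ) else 0) - a x i j) ^ 2)
            * (∑ i : Fin 2, ∑ j : Fin 2, (H i j) ^ 2)
          + (1 + 1/ε) * (f x) ^ 2
          + 2 * (H 0 1 * H 1 0 - H 0 0 * H 1 1) := by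
  intro x H hH
  have hsf : IsSymmSndFDerivAt ℝ u x :=
    (hu.contDiffAt).isSymmSndFDerivAt minSmoothness_of_isRCLikeNormedField.le
  have hsymm : H 0 1 = H 1 0 := by
    rw [hH 0 1, hH 1 0, iteratedFDeriv_two_apply, iteratedFDeriv_two_apply]
    simpa using hsf.eq (EuclideanSpace.single 0 1) (EuclideanSpace.single 1 1)
  have hfx := heq x
  simp only [Fin.sum_univ_two] at hfx ⊢
  rw [← hH 0 0, ← hH 0 1, ← hH 1 0, ← hH 1 1] at hfx
  simp only [if_pos rfl, if_neg (by decide : ¬(0:Fin 2) = 1),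
    if_neg (by decide : ¬(1:Fin 2) = 0)]
  exact combine ε (f x) (a x 0 0) (a x 0 1) (a x 1 0) (a x 1 1)
    (H 0 0) (H 0 1) (H 1 0) (H 1 1) hε hfx hsymm
end
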